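/- arXiv:1908.02413 — 8 statements merged into one kernel-verified Lean document; each statement's English description precedes it below -/
import Mathlib

section
/- The map mH1 given by u₂ = v + t(p−q)/(s−t), s₂ = 1/t + (p−q)/(t(u−v)), v₁ = u + s(p−q)/(s−t), t₁ = 1/s + (p−q)/(s(u−v)) satisfies the invariance condition s₂/t₁ = s/t, provided s ≠ t, u ≠ v, s ≠ 0, t ≠ 0 and t₁ ≠ 0. -/
/-- The mH1 map satisfies the invariance condition s₂/t₁ = s/t. -/
theorem stmt2 {K : Type*} [Field K] (p q u s v t : K)
    (hst : s ≠ t) (huv : u ≠ v) (hs : s ≠ 0) (ht : t ≠ 0)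
    (u₂ s₂ v₁ t₁ : K)
    (hu₂ : u₂ = v + t * (p - q) / (s - t))
    (hs₂ : s₂ = 1 / t + (p - q) / (t * (u - v)))
    (hv₁ : v₁ = u + s * (p - q) / (s - t))
    (ht₁ : t₁ = 1 / s + (p - q) / (s * (u - v)))
    (ht₁0 : t₁ ≠ 0) :
    s₂ / t₁ = s / t := by
  have huv' : u - v ≠ 0 := sub_ne_zero.mpr huv
  have h : s₂ * t = t₁ * s := by
    subst hs₂ ht₁; field_simp
  field_simp
  linear_combination h
end

section
/- The multi-dimensional system X^i_j = X^j + Y^j(p^i−p^j)/(Y^i−Y^j), Y^i_j = (1/Y^j)(1 + (p^i−p^j)/(X^i−X^j)) is 3-dimensionally compatible: applying the shift in direction k to X^1_2 gives the same result as applying the shift in direction 2 to X^1_3, i.e. X^1_{23} = X^1_{32}, for generic initial data (X^1,Y^1,X^2,Y^2,X^3,Y^3) and parameters p^1,p^2,p^3. -/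
set_option maxHeartbeats 16000000 in
/-- 3-dimensional compatibility of the mH1 multi-dimensional system:
X^1_{23} = X^1_{32} for generic data. -/
theorem stmt5 {K : Type*} [Field K]
    (X1 X2 X3 Y1 Y2 Y3 p1 p2 p3 : K)
    (hY1 : Y1 ≠ 0) (hY2 : Y2 ≠ 0) (hY3 : Y3 ≠ 0)
    (hY12 : Y1 - Y2 ≠ 0) (hY13 : Y1 - Y3 ≠ 0) (hY23 : Y2 - Y3 ≠ 0)
    (hX12 : X1 - X2 ≠ 0) (hX13 : X1 - X3 ≠ 0) (hX23 : X2 - X3 ≠ 0)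
    -- shifted quantities
    (X3s2 Y3s2 Y1s2 X2s3 Y2s3 Y1s3 : K)
    (hX3s2 : X3s2 = X2 + Y2 * (p3 - p2) / (Y3 - Y2))
    (hY3s2 : Y3s2 = (1 / Y2) * (1 + (p3 - p2) / (X3 - X2)))
    (hY1s2 : Y1s2 = (1 / Y2) * (1 + (p1 - p2) / (X1 - X2)))
    (hX2s3 : X2s3 = X3 + Y3 * (p2 - p3) / (Y2 - Y3))
    (hY2s3 : Y2s3 = (1 / Y3) * (1 + (p2 - p3) / (X2 - X3)))
    (hY1s3 : Y1s3 = (1 / Y3) * (1 + (p1 - p3) / (X1 - X3)))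
    (hden1 : Y1s2 - Y3s2 ≠ 0) (hden2 : Y1s3 - Y2s3 ≠ 0) :
    X3s2 + Y3s2 * (p1 - p3) / (Y1s2 - Y3s2)
      = X2s3 + Y2s3 * (p1 - p2) / (Y1s3 - Y2s3) := by
  subst hX3s2 hY3s2 hY1s2 hX2s3 hY2s3 hY1s3
  have h32 : X3 - X2 ≠ 0 := fun h => hX23 (by linear_combination -h)
  have h23 : X2 - X3 ≠ 0 := hX23
  have hN : (p1 - p2) * (X3 - X2) - (p3 - p2) * (X1 - X2) ≠ 0 := by
    intro h
    apply hden1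
    field_simp
    linear_combination h
  have hN2 : (p1 - p3) * (X2 - X3) - (p2 - p3) * (X1 - X3) ≠ 0 := by
    intro h
    apply hden2
    field_simp
    linear_combination h
  have e1 : (1 / Y2) * (1 + (p3 - p2) / (X3 - X2)) * (p1 - p3) /
      ((1 / Y2) * (1 + (p1 - p2) / (X1 - X2)) - (1 / Y2) * (1 + (p3 - p2) / (X3 - X2)))
      = (X3 - X2 + (p3 - p2)) * (p1 - p3) * (X1 - X2) /
        ((p1 - p2) * (X3 - X2) - (p3 - p2) * (X1 - X2)) := by
    rw [div_eq_div_iff hden1 hN]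
    field_simp
    ring
  have e2 : (1 / Y3) * (1 + (p2 - p3) / (X2 - X3)) * (p1 - p2) /
      ((1 / Y3) * (1 + (p1 - p3) / (X1 - X3)) - (1 / Y3) * (1 + (p2 - p3) / (X2 - X3)))
      = (X2 - X3 + (p2 - p3)) * (p1 - p2) * (X1 - X3) /
        ((p1 - p3) * (X2 - X3) - (p2 - p3) * (X1 - X3)) := by
    rw [div_eq_div_iff hden2 hN2]
    field_simp
    ring
  have hY32 : Y3 - Y2 ≠ 0 := fun h => hY23 (by linear_combination -h)
  rw [mul_div_assoc, mul_div_assoc] at *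
  rw [e1, mul_div_assoc, mul_div_assoc, e2]
  simp only [mul_div_assoc']
  rw [add_div' _ _ _ hY32, div_add_div _ _ hY32 hN, add_div' _ _ _ hY23, div_add_div _ _ hY23 hN2, div_eq_div_iff (mul_ne_zero hY32 hN) (mul_ne_zero hY23 hN2)]
  ring
end

section
/- The closed-form expression X^1_{23} = (1/(χ²³ψ²³))·(X^1ψ²³(χ²³+π²³) − π²³(X^3Y^2 − X^2Y^3) − π²³χ¹²χ¹³ψ²³(χ²³+π²³)/(π²³X^1 − p^1χ²³ + p^3X^2 − p^2X^3)), where χ^{lm} = X^l − X^m, ψ^{lm} = Y^l − Y^m, π^{lm} = p^l − p^m, is symmetric under interchanging the indices 2 and 3. -/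
/-- The closed-form expression for X^1_{23}. -/
noncomputable def Xexpr {K : Type*} [Field K]
    (X1 X2 X3 Y2 Y3 p1 p2 p3 : K) : K :=
  (1 / ((X2 - X3) * (Y2 - Y3))) *
    (X1 * (Y2 - Y3) * ((X2 - X3) + (p2 - p3))
      - (p2 - p3) * (X3 * Y2 - X2 * Y3)
      - (p2 - p3) * (X1 - X2) * (X1 - X3) * (Y2 - Y3) * ((X2 - X3) + (p2 - p3))
          / ((p2 - p3) * X1 - p1 * (X2 - X3) + p3 * X2 - p2 * X3))

/-- The closed-form expression for X^1_{23} is symmetric under interchanging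
the indices 2 and 3. -/
theorem stmt6 {K : Type*} [Field K]
    (X1 X2 X3 Y2 Y3 p1 p2 p3 : K)
    (hX : X2 - X3 ≠ 0) (hY : Y2 - Y3 ≠ 0)
    (hD : (p2 - p3) * X1 - p1 * (X2 - X3) + p3 * X2 - p2 * X3 ≠ 0)
    (hD' : (p3 - p2) * X1 - p1 * (X3 - X2) + p2 * X3 - p3 * X2 ≠ 0) :
    Xexpr X1 X2 X3 Y2 Y3 p1 p2 p3 = Xexpr X1 X3 X2 Y3 Y2 p1 p3 p2 := by
  have hX' : X3 - X2 ≠ 0 := sub_ne_zero.mpr (Ne.symm (sub_ne_zero.mp hX))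
  have hY' : Y3 - Y2 ≠ 0 := sub_ne_zero.mpr (Ne.symm (sub_ne_zero.mp hY))
  have h1 : X1 * (p2 - p3) - (X2 - X3) * p1 + X2 * p3 - X3 * p2 ≠ 0 := by
    convert hD using 1; ring
  have h2 : X1 * (p3 - p2) - p1 * (X3 - X2) + X3 * p2 - X2 * p3 ≠ 0 := by
    convert hD' using 1; ring
  unfold Xexpr
  field_simp
  ring
end

section
/- If (x, x₁, x₂, x₁₂) solves H1, i.e. (x − x₁₂)(x₁ − x₂) + p − q = 0, and u = x₁x, v = x₂x, s = x₁/x, t = x₂/x, u₂ = x₁₂x₂, v₁ = x₁₂x₁, s₂ = x₁₂/x₂, t₁ = x₁₂/x₁, then (u,s,v,t,u₂,s₂,v₁,t₁) satisfies the mH1 system: u₂ = v + t(p−q)/(s−t), s₂ = 1/t + (p−q)/(t(u−v)), v₁ = u + s(p−q)/(s−t), t₁ = 1/s + (p−q)/(s(u−v)). -/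
/-- A solution of H1 yields, via u = x₁x, v = x₂x, s = x₁/x, t = x₂/x etc.,
a solution of the mH1 system. -/
theorem stmt8 {K : Type*} [Field K] (p q x x₁ x₂ x₁₂ : K)
    (hx : x ≠ 0) (hx₁ : x₁ ≠ 0) (hx₂ : x₂ ≠ 0)
    (hx12 : x₁ ≠ x₂) (huv : x₁ * x ≠ x₂ * x)
    (hH1 : (x - x₁₂) * (x₁ - x₂) + p - q = 0)
    (u v s t u₂ v₁ s₂ t₁ : K)
    (hu : u = x₁ * x) (hv : v = x₂ * x) (hs : s = x₁ / x) (ht : t = x₂ / x)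
    (hu₂ : u₂ = x₁₂ * x₂) (hv₁ : v₁ = x₁₂ * x₁)
    (hs₂ : s₂ = x₁₂ / x₂) (ht₁ : t₁ = x₁₂ / x₁) :
    u₂ = v + t * (p - q) / (s - t) ∧
    s₂ = 1 / t + (p - q) / (t * (u - v)) ∧
    v₁ = u + s * (p - q) / (s - t) ∧
    t₁ = 1 / s + (p - q) / (s * (u - v)) := by
  have hpq : p - q = -(x - x₁₂) * (x₁ - x₂) := by linear_combination hH1
  have hst : s - t ≠ 0 := by
    rw [hs, ht, div_sub_div_same]
    exact div_ne_zero (sub_ne_zero.mpr hx12) hx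
  have hst' : x₁ - x₂ ≠ 0 := sub_ne_zero.mpr hx12
  have huv' : u - v ≠ 0 := by rw [hu, hv]; exact sub_ne_zero.mpr huv
  subst hu hv hs ht hu₂ hv₁ hs₂ ht₁
  refine ⟨?_, ?_, ?_, ?_⟩ <;> field_simp
  · linear_combination (-1) * hpq
  · linear_combination (-1) * hpq
  · linear_combination (-1) * hpq
  · linear_combination (-1) * hpq
end

section
/- Conversely, if (u,s,v,t) satisfy u = x₁x, v = x₂x, s = x₁/x, t = x₂/x for some nonzero x, x₁, x₂ (so in particular tu = sv), and u₂, s₂, v₁, t₁ are given by the mH1 formulas, then the H1 equation (x − x₁₂)(x₁ − x₂) + p − q = 0 holds, where x₁₂ := s₂·x₂. -/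
/-- Conversely, if u = x₁x, v = x₂x, s = x₁/x, t = x₂/x and s₂ is given by the
mH1 formula, then x₁₂ := s₂·x₂ satisfies the H1 equation. -/
theorem stmt9 {K : Type*} [Field K] (p q x x₁ x₂ : K)
    (hx : x * x₁ * x₂ ≠ 0) (hx12 : x₁ ≠ x₂) (huv : x₁ * x ≠ x₂ * x)
    (u v s t s₂ x₁₂ : K)
    (hu : u = x₁ * x) (hv : v = x₂ * x) (hs : s = x₁ / x) (ht : t = x₂ / x)
    (hs₂ : s₂ = 1 / t + (p - q) / (t * (u - v)))
    (hx₁₂ : x₁₂ = s₂ * x₂) :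
    (x - x₁₂) * (x₁ - x₂) + p - q = 0 := by
  have hx0 : x ≠ 0 := by intro h; apply hx; rw [h]; ring
  have hx1 : x₁ ≠ 0 := by intro h; apply hx; rw [h]; ring
  have hx2 : x₂ ≠ 0 := by intro h; apply hx; rw [h]; ring
  have ht0 : t ≠ 0 := by rw [ht]; exact div_ne_zero hx2 hx0
  have huv0 : u - v ≠ 0 := by rw [hu, hv]; exact sub_ne_zero.mpr huv
  subst hx₁₂ hs₂ hu hv ht
  field_simp
  ring
end

section
/- The Yang-Baxter map a^cH1 satisfies the braid/Yang-Baxter relation R₁₂∘R₁₃∘R₂₃ = R₂₃∘R₁₃∘R₁₂ on generic triples ((x₁,y₁,α₁),(x₂,y₂,α₂),(x₃,y₃,α₃)). -/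
/-- The a^cH1 Yang-Baxter map acting on two points with parameters.
A point is a triple (x, y, α). -/
noncomputable def acH1 {K : Type*} [Field K] (a b : K × K × K) :
    (K × K × K) × (K × K × K) :=
  ((b.1 - (a.2.2 - b.2.2) / (a.2.1 + b.2.1),
    b.2.1 - (a.2.2 - b.2.2) / (a.1 - b.1), a.2.2),
   (a.1 - (a.2.2 - b.2.2) / (a.2.1 + b.2.1),
    a.2.1 + (a.2.2 - b.2.2) / (a.1 - b.1), b.2.2))

noncomputable def R12 {K : Type*} [Field K]
    (w : (K × K × K) × (K × K × K) × (K × K × K)) :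
    (K × K × K) × (K × K × K) × (K × K × K) :=
  ((acH1 w.1 w.2.1).1, (acH1 w.1 w.2.1).2, w.2.2)

noncomputable def R13 {K : Type*} [Field K]
    (w : (K × K × K) × (K × K × K) × (K × K × K)) :
    (K × K × K) × (K × K × K) × (K × K × K) :=
  ((acH1 w.1 w.2.2).1, w.2.1, (acH1 w.1 w.2.2).2)

noncomputable def R23 {K : Type*} [Field K]
    (w : (K × K × K) × (K × K × K) × (K × K × K)) :
    (K × K × K) × (K × K × K) × (K × K × K) :=
  (w.1, (acH1 w.2.1 w.2.2).1, (acH1 w.2.1 w.2.2).2)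

/-- The denominators appearing in one application of the map are nonzero. -/
def denomOK {K : Type*} [Field K] (a b : K × K × K) : Prop :=
  a.2.1 + b.2.1 ≠ 0 ∧ a.1 - b.1 ≠ 0

set_option maxHeartbeats 1000000 in
/-- The Yang-Baxter map a^cH1 satisfies the braid relation
R₁₂∘R₁₃∘R₂₃ = R₂₃∘R₁₃∘R₁₂ on generic triples. -/
theorem stmt15 {K : Type*} [Field K]
    (w : (K × K × K) × (K × K × K) × (K × K × K))
    (h1 : denomOK w.2.1 w.2.2)
    (h2 : denomOK (R23 w).1 (R23 w).2.2)
    (h3 : denomOK (R13 (R23 w)).1 (R13 (R23 w)).2.1)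
    (h4 : denomOK w.1 w.2.1)
    (h5 : denomOK (R12 w).1 (R12 w).2.2)
    (h6 : denomOK (R13 (R12 w)).2.1 (R13 (R12 w)).2.2) :
    R12 (R13 (R23 w)) = R23 (R13 (R12 w)) := by
  obtain ⟨⟨x1,y1,a1⟩,⟨x2,y2,a2⟩,⟨x3,y3,a3⟩⟩ := w
  simp only [denomOK, R12, R13, R23, acH1] at *
  obtain ⟨h1a,h1b⟩ := h1
  obtain ⟨h2a,h2b⟩ := h2
  obtain ⟨h3a,h3b⟩ := h3
  obtain ⟨h4a,h4b⟩ := h4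
  obtain ⟨h5a,h5b⟩ := h5
  obtain ⟨h6a,h6b⟩ := h6
  field_simp at h2a h2b h5a h5b
  clear h3a h3b h6a h6b
  have hP2a : (y1+y2)*(x2-x3)+(a2-a3) ≠ 0 := fun h => h2a (by rw [div_eq_zero_iff]; left; linear_combination h)
  have hP2b : (x1-x2)*(y2+y3)+(a2-a3) ≠ 0 := fun h => h2b (by rw [div_eq_zero_iff]; left; linear_combination h)
  have hP5a : (x1-x2)*(y2+y3)-(a1-a2) ≠ 0 := fun h => h5a (by rw [div_eq_zero_iff]; left; linear_combination h)
  have hP5b : (y1+y2)*(x2-x3)-(a1-a2) ≠ 0 := fun h => h5b (by rw [div_eq_zero_iff]; left; linear_combination h)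
  have w1 : x1 - (x2 - (a2-a3)/(y2+y3)) = ((x1-x2)*(y2+y3)+(a2-a3))/(y2+y3) := by
    field_simp; ring
  have w2 : y1 + (y2 + (a2-a3)/(x2-x3)) = ((y1+y2)*(x2-x3)+(a2-a3))/(x2-x3) := by
    field_simp; ring
  have v1 : y2 - (a1-a2)/(x1-x2) + y3 = ((x1-x2)*(y2+y3)-(a1-a2))/(x1-x2) := by
    field_simp; ring
  have v2 : x2 - (a1-a2)/(y1+y2) - x3 = ((y1+y2)*(x2-x3)-(a1-a2))/(y1+y2) := by
    field_simp; ring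
  rw [w1, w2, v1, v2]
  rw [div_div_eq_mul_div, div_div_eq_mul_div, div_div_eq_mul_div, div_div_eq_mul_div]
  have w3 : y2 + (a2-a3)/(x2-x3) - (a1-a3)*(y2+y3)/((x1-x2)*(y2+y3)+(a2-a3))
      + (y3 - (a2-a3)/(x2-x3))
      = (y2+y3)*((x1-x2)*(y2+y3)-(a1-a2))/((x1-x2)*(y2+y3)+(a2-a3)) := by
    have hc : (y2+y3)*(x1-x2)+(a2-a3) ≠ 0 := by rw [mul_comm]; exact hP2b
    field_simp; ring
  have w4 : x2 - (a2-a3)/(y2+y3) - (a1-a3)*(x2-x3)/((y1+y2)*(x2-x3)+(a2-a3))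
      - (x3 - (a2-a3)/(y2+y3))
      = (x2-x3)*((y1+y2)*(x2-x3)-(a1-a2))/((y1+y2)*(x2-x3)+(a2-a3)) := by
    have hc : (x2-x3)*(y1+y2)+(a2-a3) ≠ 0 := by rw [mul_comm]; exact hP2a
    field_simp; ring
  have v3 : y1 + (a1-a2)/(x1-x2)
      + (y2 - (a1-a2)/(x1-x2) + (a1-a3)*(y1+y2)/((y1+y2)*(x2-x3)-(a1-a2)))
      = (y1+y2)*((y1+y2)*(x2-x3)+(a2-a3))/((y1+y2)*(x2-x3)-(a1-a2)) := by
    field_simp; ring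
  have v4 : x1 - (a1-a2)/(y1+y2)
      - (x2 - (a1-a2)/(y1+y2) - (a1-a3)*(x1-x2)/((x1-x2)*(y2+y3)-(a1-a2)))
      = (x1-x2)*((x1-x2)*(y2+y3)+(a2-a3))/((x1-x2)*(y2+y3)-(a1-a2)) := by
    field_simp; ring
  rw [w3, w4, v3, v4]
  rw [div_div_eq_mul_div, div_div_eq_mul_div, div_div_eq_mul_div, div_div_eq_mul_div]
  have I1 : (a2-a3)/(y2+y3)
      + (a1-a2)*((x1-x2)*(y2+y3)+(a2-a3))/((y2+y3)*((x1-x2)*(y2+y3)-(a1-a2)))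
      = (a1-a3)*(x1-x2)/((x1-x2)*(y2+y3)-(a1-a2)) := by
    have hc : (y2+y3)*(x1-x2)-(a1-a2) ≠ 0 := by rw [mul_comm]; exact hP5a
    field_simp; ring
  have I2 : (a2-a3)/(x2-x3)
      + (a1-a2)*((y1+y2)*(x2-x3)+(a2-a3))/((x2-x3)*((y1+y2)*(x2-x3)-(a1-a2)))
      = (a1-a3)*(y1+y2)/((y1+y2)*(x2-x3)-(a1-a2)) := by
    have hc : (x2-x3)*(y1+y2)-(a1-a2) ≠ 0 := by rw [mul_comm]; exact hP5b
    field_simp; ring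
  have I3 : (a1-a3)*(x2-x3)/((y1+y2)*(x2-x3)+(a2-a3))
      = (a1-a2)/(y1+y2)
      + (a2-a3)*((y1+y2)*(x2-x3)-(a1-a2))/((y1+y2)*((y1+y2)*(x2-x3)+(a2-a3))) := by
    rw [div_add_div _ _ h4a (mul_ne_zero h4a hP2a),
      div_eq_div_iff hP2a (mul_ne_zero h4a (mul_ne_zero h4a hP2a))]
    ring
  have I4 : (a1-a3)*(y2+y3)/((x1-x2)*(y2+y3)+(a2-a3))
      = (a1-a2)/(x1-x2)
      + (a2-a3)*((x1-x2)*(y2+y3)-(a1-a2))/((x1-x2)*((x1-x2)*(y2+y3)+(a2-a3))) := by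
    have hc : (y2+y3)*(x1-x2)+(a2-a3) ≠ 0 := by rw [mul_comm]; exact hP2b
    field_simp; ring
  refine Prod.ext (Prod.ext ?_ (Prod.ext ?_ rfl))
    (Prod.ext (Prod.ext ?_ (Prod.ext ?_ rfl)) (Prod.ext ?_ (Prod.ext ?_ rfl)))
  · linear_combination -I1
  · linear_combination -I2
  · linear_combination -I1 - I3
  · linear_combination I2 - I4
  · linear_combination -I3
  · linear_combination I4
end

section
/- If x and y solve double-H1, i.e. (x₁₂ − x)(y₁ − y₂) = p − q and (y₁₂ − y)(x₁ − x₂) = p − q on every elementary quadrilateral, then y satisfies the 5-point equation (p − q₋₂)/(y₋₂₁ − y) + (p₋₁ − q)/(y₋₁₂ − y) = (p − q)/(y₁₂ − y) + (p₋₁ − q₋₂)/(y₋₁₋₂ − y) on every 5-point stencil. -/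
/-- If x and y solve double-H1 on every elementary quadrilateral, then y
satisfies the 5-point equation
(p − q₋₂)/(y₋₂₁ − y) + (p₋₁ − q)/(y₋₁₂ − y)
  = (p − q)/(y₁₂ − y) + (p₋₁ − q₋₂)/(y₋₁₋₂ − y). -/
theorem stmt17 {K : Type*} [Field K]
    (x y : ℤ → ℤ → K) (p q : ℤ → K)
    (h1 : ∀ m n : ℤ,
      (x (m + 1) (n + 1) - x m n) * (y (m + 1) n - y m (n + 1)) = p m - q n)
    (h2 : ∀ m n : ℤ,
      (y (m + 1) (n + 1) - y m n) * (x (m + 1) n - x m (n + 1)) = p m - q n)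
    (hden : ∀ m n : ℤ,
      y (m + 1) (n - 1) - y m n ≠ 0 ∧ y (m - 1) (n + 1) - y m n ≠ 0 ∧
      y (m + 1) (n + 1) - y m n ≠ 0 ∧ y (m - 1) (n - 1) - y m n ≠ 0) :
    ∀ m n : ℤ,
      (p m - q (n - 1)) / (y (m + 1) (n - 1) - y m n)
        + (p (m - 1) - q n) / (y (m - 1) (n + 1) - y m n)
      = (p m - q n) / (y (m + 1) (n + 1) - y m n)
        + (p (m - 1) - q (n - 1)) / (y (m - 1) (n - 1) - y m n) := by
  intro m n
  obtain ⟨dA, dB, dC, dD⟩ := hden m n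
  have A := h1 m (n - 1)
  rw [show n - 1 + 1 = n from by ring] at A
  have B := h1 (m - 1) n
  rw [show m - 1 + 1 = m from by ring] at B
  have C := h2 m n
  have D := h2 (m - 1) (n - 1)
  rw [show m - 1 + 1 = m from by ring, show n - 1 + 1 = n from by ring] at D
  have eqA : (p m - q (n - 1)) / (y (m + 1) (n - 1) - y m n)
      = x (m + 1) n - x m (n - 1) := by
    rw [div_eq_iff dA]; linear_combination -A
  have eqB : (p (m - 1) - q n) / (y (m - 1) (n + 1) - y m n)
      = x (m - 1) n - x m (n + 1) := by
    rw [div_eq_iff dB]; linear_combination -B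
  have eqC : (p m - q n) / (y (m + 1) (n + 1) - y m n)
      = x (m + 1) n - x m (n + 1) := by
    rw [div_eq_iff dC]; linear_combination -C
  have eqD : (p (m - 1) - q (n - 1)) / (y (m - 1) (n - 1) - y m n)
      = x (m - 1) n - x m (n - 1) := by
    rw [div_eq_iff dD]; linear_combination -D
  rw [eqA, eqB, eqC, eqD]; ring
end

section
/- Under the difference substitution h = x₁ − x₂, g = y₁ − y₂, solutions of double-H1 yield the non-potential system: h₁₂ − h = (p−q)/g₁ − (p−q)/g₂ and g₁₂ − g = (p−q)/h₁ − (p−q)/h₂. -/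
/-- Under the substitution h = x₁ − x₂, g = y₁ − y₂, solutions of double-H1
yield the non-potential system
h₁₂ − h = (p−q)/g₁ − (p−q)/g₂ and g₁₂ − g = (p−q)/h₁ − (p−q)/h₂. -/
theorem stmt18 {K : Type*} [Field K]
    (x y : ℤ → ℤ → K) (p q : K)
    (h1 : ∀ m n : ℤ,
      (x (m + 1) (n + 1) - x m n) * (y (m + 1) n - y m (n + 1)) = p - q)
    (h2 : ∀ m n : ℤ,
      (y (m + 1) (n + 1) - y m n) * (x (m + 1) n - x m (n + 1)) = p - q)
    (h g : ℤ → ℤ → K)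
    (hh : ∀ m n : ℤ, h m n = x (m + 1) n - x m (n + 1))
    (hg : ∀ m n : ℤ, g m n = y (m + 1) n - y m (n + 1))
    (hnz : ∀ m n : ℤ,
      g (m + 1) n ≠ 0 ∧ g m (n + 1) ≠ 0 ∧ h (m + 1) n ≠ 0 ∧ h m (n + 1) ≠ 0) :
    ∀ m n : ℤ,
      h (m + 1) (n + 1) - h m n
          = (p - q) / g (m + 1) n - (p - q) / g m (n + 1) ∧
      g (m + 1) (n + 1) - g m n
          = (p - q) / h (m + 1) n - (p - q) / h m (n + 1) := by 
  intro m n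
  obtain ⟨hg1, hg2, hh1, hh2⟩ := hnz m n
  have e1 : (p - q) / g (m + 1) n = x (m + 1 + 1) (n + 1) - x (m + 1) n := by
    rw [eq_comm, eq_div_iff hg1, hg (m + 1) n]; exact h1 (m + 1) n
  have e2 : (p - q) / g m (n + 1) = x (m + 1) (n + 1 + 1) - x m (n + 1) := by
    rw [eq_comm, eq_div_iff hg2, hg m (n + 1)]; exact h1 m (n + 1)
  have e3 : (p - q) / h (m + 1) n = y (m + 1 + 1) (n + 1) - y (m + 1) n := by
    rw [eq_comm, eq_div_iff hh1, hh (m + 1) n]; exact h2 (m + 1) n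
  have e4 : (p - q) / h m (n + 1) = y (m + 1) (n + 1 + 1) - y m (n + 1) := by
    rw [eq_comm, eq_div_iff hh2, hh m (n + 1)]; exact h2 m (n + 1)
  constructor
  · rw [hh (m + 1) (n + 1), hh m n]; linear_combination e2 - e1
  · rw [hg (m + 1) (n + 1), hg m n]; linear_combination e4 - e3
end
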